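/- Let (X,b,c,m) be a weighted graph. Then Q^(N)_{b,c} is dominated by Q^(N)_{b,0} with respect to the pointwise modulus on ℓ²(X,m): that is, (i) for every f in the domain of Q^(N)_{b,c}, |f| lies in the domain of Q^(N)_{b,0}; (ii) for every such f and every g in the domain of Q^(N)_{b,0} with 0 ≤ g ≤ |f| pointwise, the function g·sgn f (defined by x ↦ g(x)f(x)/|f(x)| if f(x) ≠ 0 and 0 otherwise) lies in the domain of Q^(N)_{b,c}; and (iii) for all f, f̃ in the domain of Q^(N)_{b,c} with f(x)·conj(f̃(x)) = |f(x)||f̃(x)| for all x ∈ X, one has Re Q^(N)_{b,c}(f,f̃) ≥ Q^(N)_{b,0}(|f|,|f̃|), where Q^(N)_{b,c}(f,g) = ½∑_{x,y} b(x,y)(f(x) − f(y))·conj(g(x) − g(y)) + ∑_x c(x)f(x)·conj(g(x)). -/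

import Mathlib

open scoped ENNReal ComplexInnerProductSpace Classical

noncomputable section

/-- `u` is an `ℓ²`-section with respect to the vertex measure `m`. -/
def MemL2Sec {X : Type*} {E : X → Type*} [∀ x, NormedAddCommGroup (E x)]
    (m : X → ℝ) (u : ∀ x, E x) : Prop :=
  Summable fun x => ‖u x‖ ^ 2 * m x

/-- The magnetic Schrödinger energy `Q̃_{Φ,b,W}(u) ∈ [0,∞]` of a section `u`. -/
def magEnergy {X : Type*} {E : X → Type*} [∀ x, NormedAddCommGroup (E x)]
    [∀ x, InnerProductSpace ℂ (E x)]
    (b : X → X → ℝ) (Φ : ∀ x y, E y ≃ₗᵢ[ℂ] E x) (W : ∀ x, E x →ₗ[ℂ] E x)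
    (u : ∀ x, E x) : ℝ≥0∞ :=
  1 / 2 * ∑' p : X × X, ENNReal.ofReal (b p.1 p.2 * ‖u p.1 - Φ p.1 p.2 (u p.2)‖ ^ 2)
    + ∑' x, ENNReal.ofReal (⟪W x (u x), u x⟫).re

/-- The scalar Schrödinger energy `Q̃_{b,c}(f) ∈ [0,∞]` of a function `f : X → ℂ`. -/
def scalEnergy {X : Type*} (b : X → X → ℝ) (c : X → ℝ) (f : X → ℂ) : ℝ≥0∞ :=
  1 / 2 * ∑' p : X × X, ENNReal.ofReal (b p.1 p.2 * ‖f p.1 - f p.2‖ ^ 2)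
    + ∑' x, ENNReal.ofReal (c x * ‖f x‖ ^ 2)

/-- Membership in the domain of the Neumann magnetic form `Q^(N)_{Φ,b,W}`. -/
def inMagDom {X : Type*} {E : X → Type*} [∀ x, NormedAddCommGroup (E x)]
    [∀ x, InnerProductSpace ℂ (E x)] (m : X → ℝ)
    (b : X → X → ℝ) (Φ : ∀ x y, E y ≃ₗᵢ[ℂ] E x) (W : ∀ x, E x →ₗ[ℂ] E x)
    (u : ∀ x, E x) : Prop :=
  MemL2Sec m u ∧ magEnergy b Φ W u < ⊤

/-- Membership in the domain of the Neumann scalar form `Q^(N)_{b,c}`. -/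
def inScalDom {X : Type*} (m : X → ℝ) (b : X → X → ℝ) (c : X → ℝ) (f : X → ℂ) : Prop :=
  (Summable fun x => ‖f x‖ ^ 2 * m x) ∧ scalEnergy b c f < ⊤

end

open ComplexConjugate
open scoped ComplexOrder

noncomputable section

/-- The sesquilinear scalar Schrödinger form
`Q^(N)_{b,c}(f,g) = ½∑_{x,y} b(x,y)(f(x) − f(y))·conj(g(x) − g(y)) + ∑_x c(x)f(x)·conj(g(x))`. -/
def scalSesqC {X : Type*} (b : X → X → ℝ) (c : X → ℝ) (f g : X → ℂ) : ℂ :=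
  1 / 2 * ∑' p : X × X, (b p.1 p.2 : ℂ) * ((f p.1 - f p.2) * conj (g p.1 - g p.2))
    + ∑' x, (c x : ℂ) * (f x * conj (g x))

/-- The function `g · sgn f`, given by `x ↦ g(x)f(x)/|f(x)|` when `f(x) ≠ 0`, else `0`. -/
def sgnMulC {X : Type*} (g f : X → ℂ) : X → ℂ :=
  fun x => if f x = 0 then 0 else g x * f x / (‖f x‖ : ℂ)

end

section Aux

lemma norm_sub_sq' (z w : ℂ) : ‖z - w‖^2 = ‖z‖^2 + ‖w‖^2 - 2*(z * conj w).re := by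
  rw [Complex.sq_norm, Complex.sq_norm, Complex.sq_norm, Complex.normSq_sub]

lemma key2 (a a' : ℂ) (r r' : ℝ) (hr : 0 ≤ r) (hr' : 0 ≤ r')
    (h1 : r ≤ ‖a‖) (h2 : r' ≤ ‖a'‖) (s s' : ℂ)
    (hs : ‖s‖ = 1) (hs' : ‖s'‖ = 1)
    (hsa : a = (‖a‖ : ℂ) * s) (hsa' : a' = (‖a'‖ : ℂ) * s') :
    ‖(r:ℂ) * s - (r':ℂ) * s'‖^2 ≤ ‖(r:ℂ) - (r':ℂ)‖^2 + ‖a - a'‖^2 := by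
  set t := (s * conj s').re with htdef
  have ht : t ≤ 1 := by
    calc t ≤ ‖s * conj s'‖ := Complex.re_le_norm _
    _ = 1 := by rw [norm_mul, Complex.norm_conj, hs, hs']; ring
  have hprod : ((r:ℂ) * s * conj ((r':ℂ) * s')).re = r * r' * t := by
    rw [map_mul, Complex.conj_ofReal]
    have : (r:ℂ) * s * ((r':ℂ) * conj s') = ((r*r' : ℝ):ℂ) * (s * conj s') := by
      push_cast; ring
    rw [this, Complex.re_ofReal_mul]
  have hprod2 : (a * conj a').re = ‖a‖ * ‖a'‖ * t := by
    nth_rewrite 1 [hsa, hsa']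
    rw [map_mul, Complex.conj_ofReal]
    have : (‖a‖ : ℂ) * s * ((‖a'‖:ℂ) * conj s')
        = ((‖a‖ * ‖a'‖ : ℝ):ℂ) * (s * conj s') := by
      push_cast; ring
    rw [this, Complex.re_ofReal_mul]
  have e1 : ‖(r:ℂ) * s - (r':ℂ) * s'‖^2 = r^2 + r'^2 - 2*(r*r'*t) := by
    rw [norm_sub_sq', hprod]
    simp [norm_mul, Complex.norm_real, hs, hs',
      abs_of_nonneg hr, abs_of_nonneg hr']
  have e2 : ‖(r:ℂ) - (r':ℂ)‖^2 = (r - r')^2 := by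
    rw [← Complex.ofReal_sub, Complex.norm_real, Real.norm_eq_abs, sq_abs]
  have e3 : ‖a - a'‖^2 = (‖a‖)^2 + (‖a'‖)^2
      - 2*(‖a‖ * ‖a'‖ * t) := by
    rw [norm_sub_sq', hprod2]
  rw [e1, e2, e3]
  nlinarith [mul_nonneg (sub_nonneg.2 (mul_le_mul h1 h2 hr' (norm_nonneg a)))
      (sub_nonneg.2 ht), sq_nonneg (‖a‖ - ‖a'‖)]

lemma key3 (a b a' b' : ℂ)
    (h1 : a * conj b = ((‖a‖ * ‖b‖ : ℝ) : ℂ))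
    (h2 : a' * conj b' = ((‖a'‖ * ‖b'‖ : ℝ) : ℂ)) :
    (‖a‖ - ‖a'‖) * (‖b‖ - ‖b'‖)
      ≤ ((a - a') * conj (b - b')).re := by
  have e : ((a - a') * conj (b - b')).re
      = (a * conj b).re + (a' * conj b').re - (a * conj b').re - (a' * conj b).re := by
    simp [map_sub, Complex.sub_re, Complex.mul_re, Complex.conj_re, Complex.conj_im]; ring
  have hab : (a * conj b).re = ‖a‖ * ‖b‖ := by rw [h1]; simp
  have hab' : (a' * conj b').re = ‖a'‖ * ‖b'‖ := by rw [h2]; simp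
  have c1 : (a * conj b').re ≤ ‖a‖ * ‖b'‖ := by
    calc (a * conj b').re ≤ ‖a * conj b'‖ := Complex.re_le_norm _
    _ = _ := by rw [norm_mul, Complex.norm_conj]
  have c2 : (a' * conj b).re ≤ ‖a'‖ * ‖b‖ := by
    calc (a' * conj b).re ≤ ‖a' * conj b‖ := Complex.re_le_norm _
    _ = _ := by rw [norm_mul, Complex.norm_conj]
  rw [e, hab, hab']
  nlinarith

lemma summable_of_ofReal_tsum_ne_top {ι : Type*} {g : ι → ℝ} (hg : ∀ i, 0 ≤ g i)
    (h : ∑' i, ENNReal.ofReal (g i) ≠ ⊤) : Summable g := by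
  have := ENNReal.summable_toReal h
  simpa [ENNReal.toReal_ofReal (hg _)] using this

lemma half_tsum_ne_top {ι : Type*} {g : ι → ℝ≥0∞} {S : ℝ≥0∞}
    (h : 1/2 * ∑' i, g i + S < ⊤) : (∑' i, g i) ≠ ⊤ ∧ S ≠ ⊤ := by
  obtain ⟨h1, h2⟩ := ENNReal.add_lt_top.mp h
  refine ⟨fun hT => ?_, h2.ne⟩
  rw [hT, ENNReal.mul_top (by norm_num)] at h1
  exact lt_irrefl _ h1

end Aux

/-- For a weighted graph `(X,b,c,m)`, the scalar form `Q^(N)_{b,c}` is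
dominated by `Q^(N)_{b,0}` with respect to the pointwise modulus: (i) `f` in the domain of
`Q^(N)_{b,c}` implies `|f|` in the domain of `Q^(N)_{b,0}`; (ii) if moreover `g` is in the
domain of `Q^(N)_{b,0}` with `0 ≤ g ≤ |f|` pointwise, then `g·sgn f` is in the domain of
`Q^(N)_{b,c}`; (iii) `Re Q^(N)_{b,c}(f,f̃) ≥ Q^(N)_{b,0}(|f|,|f̃|)` for pointwise paired
`f, f̃` in the domain of `Q^(N)_{b,c}`. -/
theorem stmt12 {X : Type*} [Countable X]
    (b : X → X → ℝ) (hb0 : ∀ x y, 0 ≤ b x y) (hbdiag : ∀ x, b x x = 0)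
    (hbsymm : ∀ x y, b x y = b y x) (hbsum : ∀ x, Summable fun y => b x y)
    (c : X → ℝ) (hc : ∀ x, 0 ≤ c x) (m : X → ℝ) (hm : ∀ x, 0 < m x) :
    -- (i)
    (∀ f : X → ℂ, inScalDom m b c f →
      inScalDom m b (fun _ => (0 : ℝ)) fun x => (‖f x‖ : ℂ)) ∧
    -- (ii)
    (∀ f : X → ℂ, inScalDom m b c f → ∀ g : X → ℂ,
      inScalDom m b (fun _ => (0 : ℝ)) g →
      (∀ x, 0 ≤ g x ∧ g x ≤ (‖f x‖ : ℂ)) →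
        inScalDom m b c (sgnMulC g f)) ∧
    -- (iii)
    (∀ f f' : X → ℂ, inScalDom m b c f → inScalDom m b c f' →
      (∀ x, f x * conj (f' x) = ((‖f x‖ * ‖f' x‖ : ℝ) : ℂ)) →
        (scalSesqC b (fun _ => (0 : ℝ)) (fun x => (‖f x‖ : ℂ))
            (fun x => (‖f' x‖ : ℂ))).re ≤ (scalSesqC b c f f').re) := by
  have normabs : ∀ (z : ℂ), ‖((‖z‖ : ℝ) : ℂ)‖ = ‖z‖ := fun z => by
    rw [Complex.norm_real, norm_norm]
  -- pointwise bound for part (i)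
  have absdiff : ∀ (z w : ℂ),
      ‖((‖z‖ : ℝ):ℂ) - ((‖w‖ : ℝ):ℂ)‖ ≤ ‖z - w‖ := fun z w => by
    rw [← Complex.ofReal_sub, Complex.norm_real, Real.norm_eq_abs]
    exact abs_norm_sub_norm_le z w
  refine ⟨?_, ?_, ?_⟩
  · -- part (i)
    intro f hf
    constructor
    · have := hf.1
      refine Summable.congr this fun x => ?_
      rw [normabs]
    · unfold inScalDom at hf
      unfold scalEnergy at hf ⊢
      have hzero : ∑' x : X, ENNReal.ofReal ((0:ℝ) * ‖((‖f x‖:ℝ):ℂ)‖ ^ 2) = 0 := by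
        simp
      rw [hzero]
      have hle : ∑' p : X × X,
          ENNReal.ofReal (b p.1 p.2 * ‖((‖f p.1‖:ℝ):ℂ) - ((‖f p.2‖:ℝ):ℂ)‖ ^ 2)
          ≤ ∑' p : X × X, ENNReal.ofReal (b p.1 p.2 * ‖f p.1 - f p.2‖ ^ 2) := by
        refine ENNReal.tsum_le_tsum fun p => ENNReal.ofReal_le_ofReal ?_
        refine mul_le_mul_of_nonneg_left ?_ (hb0 _ _)
        exact pow_le_pow_left₀ (norm_nonneg _) (absdiff _ _) 2
      calc 1/2 * ∑' p : X × X,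
            ENNReal.ofReal (b p.1 p.2 * ‖((‖f p.1‖:ℝ):ℂ) - ((‖f p.2‖:ℝ):ℂ)‖ ^ 2) + 0
          ≤ 1/2 * ∑' p : X × X, ENNReal.ofReal (b p.1 p.2 * ‖f p.1 - f p.2‖ ^ 2)
            + ∑' x, ENNReal.ofReal (c x * ‖f x‖ ^ 2) := by
            gcongr
            exact zero_le
        _ < ⊤ := hf.2
  · -- part (ii)
    intro f hf g hg hfg
    set r : X → ℝ := fun x => (g x).re with hrdef
    have hgr : ∀ x, g x = ((r x : ℝ) : ℂ) := fun x => by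
      have h0 := (Complex.le_def.mp (hfg x).1).2
      apply Complex.ext <;> simp [hrdef, ← h0]
    have hr0 : ∀ x, 0 ≤ r x := fun x => by
      have := (Complex.le_def.mp (hfg x).1).1
      simpa using this
    have hrle : ∀ x, r x ≤ ‖f x‖ := fun x => by
      have := (Complex.le_def.mp (hfg x).2).1
      simpa using this
    set s : X → ℂ := fun x => if f x = 0 then 1 else f x / ((‖f x‖ : ℝ) : ℂ) with hsdef
    have hs1 : ∀ x, ‖s x‖ = 1 := fun x => by
      by_cases h : f x = 0
      · simp [hsdef, h]
      · simp only [hsdef, if_neg h]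
        rw [norm_div, Complex.norm_real, norm_norm, div_self (norm_ne_zero_iff.mpr h)]
    have hfs : ∀ x, f x = ((‖f x‖ : ℝ) : ℂ) * s x := fun x => by
      by_cases h : f x = 0
      · simp [hsdef, h]
      · have hA : ((‖f x‖ : ℝ) : ℂ) ≠ 0 := by
          simpa [Complex.ofReal_eq_zero] using norm_ne_zero_iff.mpr h
        simp only [hsdef, if_neg h]
        rw [mul_div_assoc', mul_comm, mul_div_assoc, div_self hA, mul_one]
    have hhx : ∀ x, sgnMulC g f x = ((r x : ℝ) : ℂ) * s x := fun x => by
      by_cases h : f x = 0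
      · have : g x = 0 := by
          have h2 := (hfg x).2
          rw [h] at h2
          simp only [norm_zero, Complex.ofReal_zero] at h2
          exact le_antisymm h2 (hfg x).1
        simp [sgnMulC, hsdef, h, ← hgr x, this]
      · simp only [sgnMulC, hsdef, if_neg h]
        rw [← hgr x]; ring
    have hnormh : ∀ x, ‖sgnMulC g f x‖ = r x := fun x => by
      rw [hhx x, norm_mul, Complex.norm_real, Real.norm_eq_abs,
        abs_of_nonneg (hr0 x), hs1 x, mul_one]
    constructor
    · refine Summable.of_nonneg_of_le (fun x => ?_) (fun x => ?_) hf.1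
      · exact mul_nonneg (pow_nonneg (norm_nonneg _) 2) (hm x).le
      · rw [hnormh x]
        refine mul_le_mul_of_nonneg_right ?_ (hm x).le
        refine pow_le_pow_left₀ (hr0 x) ?_ 2
        exact hrle x
    · -- energy bound
      have hkey : ∀ p : X × X, ‖sgnMulC g f p.1 - sgnMulC g f p.2‖^2
          ≤ ‖g p.1 - g p.2‖^2 + ‖f p.1 - f p.2‖^2 := fun p => by
        rw [hhx p.1, hhx p.2, hgr p.1, hgr p.2]
        exact key2 (f p.1) (f p.2) (r p.1) (r p.2) (hr0 _) (hr0 _) (hrle _) (hrle _)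
          (s p.1) (s p.2) (hs1 _) (hs1 _) (hfs _) (hfs _)
      unfold inScalDom at hf hg
      unfold scalEnergy at hf hg ⊢
      obtain ⟨hTf, hSf⟩ := half_tsum_ne_top hf.2
      obtain ⟨hTg, _⟩ := half_tsum_ne_top hg.2
      have hb1 : ∑' p : X × X, ENNReal.ofReal (b p.1 p.2 * ‖sgnMulC g f p.1 - sgnMulC g f p.2‖ ^ 2)
          ≤ (∑' p : X × X, ENNReal.ofReal (b p.1 p.2 * ‖g p.1 - g p.2‖ ^ 2))
            + ∑' p : X × X, ENNReal.ofReal (b p.1 p.2 * ‖f p.1 - f p.2‖ ^ 2) := by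
        rw [← ENNReal.tsum_add]
        refine ENNReal.tsum_le_tsum fun p => ?_
        calc ENNReal.ofReal (b p.1 p.2 * ‖sgnMulC g f p.1 - sgnMulC g f p.2‖ ^ 2)
            ≤ ENNReal.ofReal (b p.1 p.2 * ‖g p.1 - g p.2‖ ^ 2 + b p.1 p.2 * ‖f p.1 - f p.2‖ ^ 2) := by
              refine ENNReal.ofReal_le_ofReal ?_
              rw [← mul_add]
              exact mul_le_mul_of_nonneg_left (hkey p) (hb0 _ _)
          _ ≤ _ := ENNReal.ofReal_add_le
      have hb2 : ∑' x : X, ENNReal.ofReal (c x * ‖sgnMulC g f x‖ ^ 2)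
          ≤ ∑' x : X, ENNReal.ofReal (c x * ‖f x‖ ^ 2) := by
        refine ENNReal.tsum_le_tsum fun x => ENNReal.ofReal_le_ofReal ?_
        refine mul_le_mul_of_nonneg_left ?_ (hc x)
        rw [hnormh x]
        refine pow_le_pow_left₀ (hr0 x) ?_ 2
        exact hrle x
      have := add_le_add (mul_le_mul_right hb1 (1/2 : ℝ≥0∞)) hb2
      refine lt_of_le_of_lt this ?_
      rw [mul_add]
      refine ENNReal.add_lt_top.mpr ⟨ENNReal.add_lt_top.mpr ⟨?_, ?_⟩, ?_⟩
      · exact ENNReal.mul_lt_top (by norm_num) (lt_top_iff_ne_top.mpr hTg)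
      · exact ENNReal.mul_lt_top (by norm_num) (lt_top_iff_ne_top.mpr hTf)
      · exact lt_top_iff_ne_top.mpr hSf
  · -- part (iii)
    intro f f' hf hf' hpair
    unfold inScalDom scalEnergy at hf hf'
    obtain ⟨hTf, hSf⟩ := half_tsum_ne_top hf.2
    obtain ⟨hTf', hSf'⟩ := half_tsum_ne_top hf'.2
    -- real summabilities
    have hSumf : Summable fun p : X × X => b p.1 p.2 * ‖f p.1 - f p.2‖ ^ 2 :=
      summable_of_ofReal_tsum_ne_top (fun p => mul_nonneg (hb0 _ _) (pow_nonneg (norm_nonneg _) 2)) hTf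
    have hSumf' : Summable fun p : X × X => b p.1 p.2 * ‖f' p.1 - f' p.2‖ ^ 2 :=
      summable_of_ofReal_tsum_ne_top (fun p => mul_nonneg (hb0 _ _) (pow_nonneg (norm_nonneg _) 2)) hTf'
    have hSumcf : Summable fun x => c x * ‖f x‖ ^ 2 :=
      summable_of_ofReal_tsum_ne_top (fun x => mul_nonneg (hc _) (pow_nonneg (norm_nonneg _) 2)) hSf
    have hSumcf' : Summable fun x => c x * ‖f' x‖ ^ 2 :=
      summable_of_ofReal_tsum_ne_top (fun x => mul_nonneg (hc _) (pow_nonneg (norm_nonneg _) 2)) hSf'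
    have hbound : Summable fun p : X × X =>
        (b p.1 p.2 * ‖f p.1 - f p.2‖ ^ 2 + b p.1 p.2 * ‖f' p.1 - f' p.2‖ ^ 2) / 2 :=
      (hSumf.add hSumf').div_const 2
    have hnormle : ∀ p : X × X, b p.1 p.2 * ‖f p.1 - f p.2‖ * ‖f' p.1 - f' p.2‖
        ≤ (b p.1 p.2 * ‖f p.1 - f p.2‖ ^ 2 + b p.1 p.2 * ‖f' p.1 - f' p.2‖ ^ 2) / 2 := fun p => by
      have h1 := hb0 p.1 p.2
      nlinarith [sq_nonneg (‖f p.1 - f p.2‖ - ‖f' p.1 - f' p.2‖), norm_nonneg (f p.1 - f p.2),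
        norm_nonneg (f' p.1 - f' p.2)]
    -- complex summabilities
    have hC : Summable fun p : X × X =>
        (b p.1 p.2 : ℂ) * ((f p.1 - f p.2) * conj (f' p.1 - f' p.2)) := by
      refine Summable.of_norm_bounded hbound fun p => ?_
      rw [norm_mul, norm_mul, Complex.norm_real, Real.norm_eq_abs,
        abs_of_nonneg (hb0 _ _), RCLike.norm_conj, ← mul_assoc]
      exact hnormle p
    have hCc : Summable fun x => (c x : ℂ) * (f x * conj (f' x)) := by
      refine Summable.of_norm_bounded
        (g := fun x => (c x * ‖f x‖ ^ 2 + c x * ‖f' x‖ ^ 2) / 2) ((hSumcf.add hSumcf').div_const 2)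
        fun x => ?_
      rw [norm_mul, norm_mul, Complex.norm_real, Real.norm_eq_abs,
        abs_of_nonneg (hc x), RCLike.norm_conj, ← mul_assoc]
      have h1 := hc x
      nlinarith [sq_nonneg (‖f x‖ - ‖f' x‖), norm_nonneg (f x), norm_nonneg (f' x)]
    -- real family on the abs side
    have habsle : ∀ p : X × X,
        |b p.1 p.2 * ((‖f p.1‖ - ‖f p.2‖)
          * (‖f' p.1‖ - ‖f' p.2‖))|
        ≤ (b p.1 p.2 * ‖f p.1 - f p.2‖ ^ 2 + b p.1 p.2 * ‖f' p.1 - f' p.2‖ ^ 2) / 2 := fun p => by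
      rw [abs_mul, abs_of_nonneg (hb0 p.1 p.2), abs_mul]
      calc b p.1 p.2 * (|‖f p.1‖ - ‖f p.2‖|
            * |‖f' p.1‖ - ‖f' p.2‖|)
          ≤ b p.1 p.2 * (‖f p.1 - f p.2‖ * ‖f' p.1 - f' p.2‖) := by
            refine mul_le_mul_of_nonneg_left ?_ (hb0 _ _)
            refine mul_le_mul ?_ ?_ (abs_nonneg _) (norm_nonneg _)
            · exact abs_norm_sub_norm_le _ _
            · exact abs_norm_sub_norm_le _ _
        _ ≤ _ := by rw [← mul_assoc]; exact hnormle p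
    have hL : Summable fun p : X × X => b p.1 p.2 * ((‖f p.1‖ - ‖f p.2‖)
        * (‖f' p.1‖ - ‖f' p.2‖)) := by
      refine Summable.of_abs ?_
      exact Summable.of_nonneg_of_le (fun p => abs_nonneg _) habsle hbound
    have hR : Summable fun p : X × X =>
        ((b p.1 p.2 : ℂ) * ((f p.1 - f p.2) * conj (f' p.1 - f' p.2))).re := by
      have := Complex.reCLM.summable hC
      simpa using this
    have hhalf : (1 / 2 : ℂ) = ((1/2 : ℝ) : ℂ) := by norm_num
    -- RHS re
    have hre1 : ((1/2 : ℂ) * (∑' p : X × X, (b p.1 p.2 : ℂ) * ((f p.1 - f p.2) * conj (f' p.1 - f' p.2)))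
        + ∑' x, (c x : ℂ) * (f x * conj (f' x))).re
        = (1/2) * (∑' p : X × X, ((b p.1 p.2 : ℂ) * ((f p.1 - f p.2) * conj (f' p.1 - f' p.2))).re)
          + ∑' x, ((c x : ℂ) * (f x * conj (f' x))).re := by
      rw [Complex.add_re, hhalf, Complex.re_ofReal_mul, Complex.re_tsum hC, Complex.re_tsum hCc]
    -- LHS: everything is real
    have hLreal : ∀ p : X × X, (b p.1 p.2 : ℂ) * ((((‖f p.1‖ :ℝ):ℂ) - ((‖f p.2‖:ℝ):ℂ))
        * conj (((‖f' p.1‖:ℝ):ℂ) - ((‖f' p.2‖:ℝ):ℂ)))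
        = ((b p.1 p.2 * ((‖f p.1‖ - ‖f p.2‖)
          * (‖f' p.1‖ - ‖f' p.2‖)) : ℝ) : ℂ) := fun p => by
      rw [← Complex.ofReal_sub, ← Complex.ofReal_sub, Complex.conj_ofReal]
      push_cast; ring
    set L : ℝ := ∑' p : X × X, b p.1 p.2 * ((‖f p.1‖ - ‖f p.2‖)
        * (‖f' p.1‖ - ‖f' p.2‖)) with hLdef
    have hLHS : (scalSesqC b (fun _ => (0:ℝ)) (fun x => ((‖f x‖ : ℝ) : ℂ))
        (fun x => ((‖f' x‖ : ℝ) : ℂ))).re = (1/2) * L := by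
      unfold scalSesqC
      have e0 : (∑' x : X, (((fun _ => (0:ℝ)) x : ℝ) : ℂ)
          * (((‖f x‖:ℝ):ℂ) * conj ((‖f' x‖:ℝ):ℂ))) = 0 := by
        simp
      have eT0 : (∑' p : X × X, ((b p.1 p.2 : ℝ):ℂ)
          * ((((‖f p.1‖:ℝ):ℂ) - ((‖f p.2‖:ℝ):ℂ))
            * conj (((‖f' p.1‖:ℝ):ℂ) - ((‖f' p.2‖:ℝ):ℂ))))
          = ((L : ℝ) : ℂ) := by
        rw [hLdef, Complex.ofReal_tsum]
        exact tsum_congr fun p => hLreal p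
      rw [eT0, e0, add_zero, hhalf, Complex.re_ofReal_mul, Complex.ofReal_re]
    have hRHS : (scalSesqC b c f f').re
        = (1/2) * (∑' p : X × X, ((b p.1 p.2 : ℂ) * ((f p.1 - f p.2) * conj (f' p.1 - f' p.2))).re)
          + ∑' x, ((c x : ℂ) * (f x * conj (f' x))).re := by
      unfold scalSesqC
      exact hre1
    rw [hLHS, hRHS]
    have hptwise : ∀ p : X × X,
        b p.1 p.2 * ((‖f p.1‖ - ‖f p.2‖)
          * (‖f' p.1‖ - ‖f' p.2‖))
        ≤ ((b p.1 p.2 : ℂ) * ((f p.1 - f p.2) * conj (f' p.1 - f' p.2))).re := fun p => by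
      rw [Complex.re_ofReal_mul]
      exact mul_le_mul_of_nonneg_left (key3 (f p.1) (f' p.1) (f p.2) (f' p.2)
        (hpair p.1) (hpair p.2)) (hb0 _ _)
    have hLR : L ≤ ∑' p : X × X,
        ((b p.1 p.2 : ℂ) * ((f p.1 - f p.2) * conj (f' p.1 - f' p.2))).re := by
      rw [hLdef]
      exact Summable.tsum_le_tsum hptwise hL hR
    have hSre : 0 ≤ ∑' x, ((c x : ℂ) * (f x * conj (f' x))).re := by
      refine tsum_nonneg fun x => ?_
      rw [Complex.re_ofReal_mul, hpair x, Complex.ofReal_re]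
      exact mul_nonneg (hc x) (mul_nonneg (norm_nonneg _) (norm_nonneg _))
    nlinarith [hLR, hSre]
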